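/- For every integer n ≥ 2, the simple continued fraction expansion of √(n² + 2n − 1) is [n; \overline{1, n−1, 1, 2n}]. -/

import Mathlib

set_option maxHeartbeats 1000000

open GenContFract

private lemma ofPair (y : ℝ) (m : ℤ) (f : ℝ) (h1 : (m : ℝ) ≤ y) (h2 : y < m + 1)
    (h3 : f = y - m) : GenContFract.IntFractPair.of y = ⟨m, f⟩ := by
  have hm : ⌊y⌋ = m := by
    rw [Int.floor_eq_iff]
    exact ⟨h1, by exact_mod_cast h2⟩
  unfold GenContFract.IntFractPair.of
  rw [Int.fract, hm, h3]

theorem cf_period_four (n : ℤ) (hn : 2 ≤ n) :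
    ⌊Real.sqrt ((n ^ 2 + 2 * n - 1 : ℤ) : ℝ)⌋ = n ∧
    ∀ i : ℕ,
      (GenContFract.of (Real.sqrt ((n ^ 2 + 2 * n - 1 : ℤ) : ℝ))).partDens.get? i
        = some ((([1, n - 1, 1, 2 * n] : List ℤ).getD (i % 4) 0 : ℝ)) := by
  set N : ℝ := (n : ℝ) with hN
  have hN2 : (2 : ℝ) ≤ N := by rw [hN]; exact_mod_cast hn
  set x : ℝ := Real.sqrt ((n ^ 2 + 2 * n - 1 : ℤ) : ℝ) with hxdef
  have hd : ((n ^ 2 + 2 * n - 1 : ℤ) : ℝ) = N ^ 2 + 2 * N - 1 := by push_cast; ring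
  have hdnn : (0 : ℝ) ≤ N ^ 2 + 2 * N - 1 := by nlinarith
  have hx2 : x ^ 2 = N ^ 2 + 2 * N - 1 := by
    rw [hxdef, hd, Real.sq_sqrt hdnn]
  have hxl : N < x := by
    rw [hxdef, hd]
    rw [show N < Real.sqrt (N ^ 2 + 2 * N - 1) ↔ _ from Real.lt_sqrt (by linarith)]
    nlinarith
  have hxu : x < N + 1 := by
    rw [hxdef, hd]
    rw [show Real.sqrt (N ^ 2 + 2 * N - 1) < N + 1 ↔ _ from Real.sqrt_lt' (by linarith)]
    nlinarith
  have h2n : (0 : ℝ) < 2 * N - 1 := by linarith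
  set g0 : ℝ := x - N with hg0
  set g1 : ℝ := (x - N + 1) / (2 * N - 1) with hg1
  set g2 : ℝ := (x - N + 1) / 2 with hg2
  set g3 : ℝ := (x - N) / (2 * N - 1) with hg3
  -- step lemmas
  have s1 : ∀ (k : ℕ) (p : IntFractPair ℝ), IntFractPair.stream x k = some p → p.fr = g0 →
      IntFractPair.stream x (k + 1) = some ⟨1, g1⟩ := by
    intro k p hk hfr
    rw [IntFractPair.stream_succ_of_some hk (by rw [hfr, hg0]; exact ne_of_gt (by linarith))]
    congr 1
    rw [hfr, hg0]
    have hinv : (x - N)⁻¹ = (x + N) / (2 * N - 1) :=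
      inv_eq_of_mul_eq_one_right (by rw [mul_div_assoc', div_eq_one_iff_eq h2n.ne']; nlinarith)
    rw [hinv]
    apply ofPair
    · push_cast
      rw [le_div_iff₀ h2n]; nlinarith
    · push_cast
      rw [div_lt_iff₀ h2n]; nlinarith
    · rw [hg1]; push_cast; rw [div_sub_one h2n.ne']; ring
  have s2 : ∀ (k : ℕ) (p : IntFractPair ℝ), IntFractPair.stream x k = some p → p.fr = g1 →
      IntFractPair.stream x (k + 1) = some ⟨n - 1, g2⟩ := by
    intro k p hk hfr
    rw [IntFractPair.stream_succ_of_some hk (by rw [hfr, hg1]; exact ne_of_gt (div_pos (by linarith) h2n))]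
    congr 1
    rw [hfr, hg1]
    have hne : x - N + 1 ≠ 0 := ne_of_gt (by linarith)
    have hinv : ((x - N + 1) / (2 * N - 1))⁻¹ = (x + N - 1) / 2 :=
      inv_eq_of_mul_eq_one_right (by rw [div_mul_div_comm, div_eq_one_iff_eq (mul_pos h2n two_pos).ne']; nlinarith)
    rw [hinv]
    apply ofPair
    · push_cast
      rw [le_div_iff₀ (by norm_num : (0:ℝ) < 2)]; nlinarith
    · push_cast
      rw [div_lt_iff₀ (by norm_num : (0:ℝ) < 2)]; nlinarith
    · rw [hg2]; push_cast; field_simp; ring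
  have s3 : ∀ (k : ℕ) (p : IntFractPair ℝ), IntFractPair.stream x k = some p → p.fr = g2 →
      IntFractPair.stream x (k + 1) = some ⟨1, g3⟩ := by
    intro k p hk hfr
    rw [IntFractPair.stream_succ_of_some hk (by rw [hfr, hg2]; exact ne_of_gt (div_pos (by linarith) (by norm_num)))]
    congr 1
    rw [hfr, hg2]
    have hne : x - N + 1 ≠ 0 := ne_of_gt (by linarith)
    have hinv : ((x - N + 1) / 2)⁻¹ = (x + N - 1) / (2 * N - 1) :=
      inv_eq_of_mul_eq_one_right (by rw [div_mul_div_comm, div_eq_one_iff_eq (mul_pos two_pos h2n).ne']; nlinarith)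
    rw [hinv]
    apply ofPair
    · push_cast
      rw [le_div_iff₀ h2n]; nlinarith
    · push_cast
      rw [div_lt_iff₀ h2n]; nlinarith
    · rw [hg3]; push_cast; rw [div_sub_one h2n.ne']; ring
  have s4 : ∀ (k : ℕ) (p : IntFractPair ℝ), IntFractPair.stream x k = some p → p.fr = g3 →
      IntFractPair.stream x (k + 1) = some ⟨2 * n, g0⟩ := by
    intro k p hk hfr
    rw [IntFractPair.stream_succ_of_some hk (by rw [hfr, hg3]; exact ne_of_gt (div_pos (by linarith) h2n))]
    congr 1
    rw [hfr, hg3]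
    have hne : x - N ≠ 0 := ne_of_gt (by linarith)
    have hinv : ((x - N) / (2 * N - 1))⁻¹ = x + N :=
      inv_eq_of_mul_eq_one_right (by rw [div_mul_eq_mul_div, div_eq_one_iff_eq h2n.ne']; nlinarith)
    rw [hinv]
    apply ofPair
    · push_cast; nlinarith
    · push_cast; nlinarith
    · rw [hg0]; push_cast; ring
  have h0 : IntFractPair.stream x 0 = some ⟨n, g0⟩ := by
    rw [IntFractPair.stream_zero]
    congr 1
    apply ofPair
    · linarith
    · linarith
    · rw [hg0]
  have key : ∀ q : ℕ,
      IntFractPair.stream x (4 * q + 1) = some ⟨1, g1⟩ ∧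
      IntFractPair.stream x (4 * q + 2) = some ⟨n - 1, g2⟩ ∧
      IntFractPair.stream x (4 * q + 3) = some ⟨1, g3⟩ ∧
      IntFractPair.stream x (4 * q + 4) = some ⟨2 * n, g0⟩ := by
    intro q
    induction q with
    | zero =>
      have h1 := s1 0 _ h0 rfl
      have h2 := s2 1 _ h1 rfl
      have h3 := s3 2 _ h2 rfl
      have h4 := s4 3 _ h3 rfl
      exact ⟨h1, h2, h3, h4⟩
    | succ q ih =>
      have h1 := s1 (4 * q + 4) _ ih.2.2.2 rfl
      have h2 := s2 (4 * q + 5) _ (by convert h1 using 2) rfl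
      have h3 := s3 (4 * q + 6) _ (by convert h2 using 2) rfl
      have h4 := s4 (4 * q + 7) _ (by convert h3 using 2) rfl
      refine ⟨by convert h1 using 2; ring, by convert h2 using 2; ring,
        by convert h3 using 2; ring, by convert h4 using 2; ring⟩
  constructor
  · rw [Int.floor_eq_iff]
    constructor
    · exact le_of_lt hxl
    · rw [hN] at hxu; exact_mod_cast hxu
  · intro i
    have hdm := Nat.div_add_mod i 4
    set q := i / 4 with hq
    set r := i % 4 with hr
    have hrlt : r < 4 := Nat.mod_lt _ (by norm_num)
    interval_cases r
    · have hstream : IntFractPair.stream x (i + 1) = some ⟨1, g1⟩ := by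
        have := (key q).1
        rwa [show 4 * q + 1 = i + 1 by omega] at this
      have hs := GenContFract.get?_of_eq_some_of_succ_get?_intFractPair_stream hstream
      simp [partDens, Stream'.Seq.map_get?, hs]
    · have hstream : IntFractPair.stream x (i + 1) = some ⟨n - 1, g2⟩ := by
        have := (key q).2.1
        rwa [show 4 * q + 2 = i + 1 by omega] at this
      have hs := GenContFract.get?_of_eq_some_of_succ_get?_intFractPair_stream hstream
      simp [partDens, Stream'.Seq.map_get?, hs]
    · have hstream : IntFractPair.stream x (i + 1) = some ⟨1, g3⟩ := by
        have := (key q).2.2.1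
        rwa [show 4 * q + 3 = i + 1 by omega] at this
      have hs := GenContFract.get?_of_eq_some_of_succ_get?_intFractPair_stream hstream
      simp [partDens, Stream'.Seq.map_get?, hs]
    · have hstream : IntFractPair.stream x (i + 1) = some ⟨2 * n, g0⟩ := by
        have := (key q).2.2.2
        rwa [show 4 * q + 4 = i + 1 by omega] at this
      have hs := GenContFract.get?_of_eq_some_of_succ_get?_intFractPair_stream hstream
      simp [partDens, Stream'.Seq.map_get?, hs]
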